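/- If A is a totally unimodular matrix having at most two nonzero entries in every column, then A is strongly unimodular. -/

import Mathlib

/-- A matrix is strongly unimodular if it is totally unimodular and remains totally
unimodular after replacing any single nonzero entry by `0`. -/
def IsStronglyUnimodular {m n : Type*} [DecidableEq m] [DecidableEq n]
    (A : Matrix m n ℚ) : Prop :=
  A.IsTotallyUnimodular ∧
    ∀ i j, A i j ≠ 0 → (A.updateRow i (Function.update (A i) j 0)).IsTotallyUnimodular
/-- A TU matrix with at most two nonzero entries in every column is strongly unimodular. -/
theorem isStronglyUnimodular_of_le_two_nonzeros_per_col {m n : Type*}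
    [Fintype m] [DecidableEq m] [DecidableEq n]
    (A : Matrix m n ℚ) (hTU : A.IsTotallyUnimodular)
    (h : ∀ j, (Finset.univ.filter fun i => A i j ≠ 0).card ≤ 2) :
    IsStronglyUnimodular A := by
  refine ⟨hTU, fun i j hAij => ?_⟩
  set A' : Matrix m n ℚ := A.updateRow i (Function.update (A i) j 0) with hA'
  -- A' agrees with A away from entry (i, j)
  have hA'off : ∀ i' j', (i' ≠ i ∨ j' ≠ j) → A' i' j' = A i' j' := by
    intro i' j' hij
    rw [hA', Matrix.updateRow_apply]
    rcases eq_or_ne i' i with rfl | hi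
    · rcases hij with hij | hij
      · exact absurd rfl hij
      · simp [hij]
    · rw [if_neg hi]
  have hA'ij : A' i j = 0 := by simp [hA']
  -- column j of A' has at most one nonzero entry
  have huniq : ∀ i₁ i₂, A' i₁ j ≠ 0 → A' i₂ j ≠ 0 → i₁ = i₂ := by
    intro i₁ i₂ h1 h2
    have hne : ∀ x, A' x j ≠ 0 → x ∈ (Finset.univ.filter fun i' => A i' j ≠ 0).erase i := by
      intro x hx
      have hxi : x ≠ i := by rintro rfl; exact hx hA'ij
      refine Finset.mem_erase.mpr ⟨hxi, Finset.mem_filter.mpr ⟨Finset.mem_univ _, ?_⟩⟩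
      rw [← hA'off x j (Or.inl hxi)]; exact hx
    have hi : i ∈ (Finset.univ.filter fun i' => A i' j ≠ 0) :=
      Finset.mem_filter.mpr ⟨Finset.mem_univ _, hAij⟩
    have hcard : ((Finset.univ.filter fun i' => A i' j ≠ 0).erase i).card ≤ 1 := by
      have he := Finset.card_erase_of_mem hi
      have h2' := h j
      omega
    exact Finset.card_le_one.mp hcard _ (hne i₁ h1) _ (hne i₂ h2)
  intro k f g hf hg
  by_cases hj : ∃ s, g s = j
  · obtain ⟨s₀, hs₀⟩ := hj
    by_cases hr : ∃ r, A' (f r) j ≠ 0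
    · obtain ⟨r₁, hr₁⟩ := hr
      set c : ℚ := A' (f r₁) j with hc
      set D : Matrix (Fin k) (Fin k) ℚ :=
        (Matrix.fromCols A (1 : Matrix m m ℚ)).submatrix f
          (fun s => if s = s₀ then Sum.inr (f r₁) else Sum.inl (g s)) with hD
      have hDcol : ∀ r, D r s₀ = (Pi.single r₁ 1 : Fin k → ℚ) r := by
        intro r
        rcases eq_or_ne r r₁ with rfl | hrr
        · simp [hD, Matrix.one_apply]
        · simp [hD, Matrix.one_apply, Pi.single_apply, hrr, hf.ne hrr]
      have hkey : A'.submatrix f g = D.updateCol s₀ (c • (Pi.single r₁ 1 : Fin k → ℚ)) := by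
        ext r s
        rw [Matrix.updateCol_apply]
        rcases eq_or_ne s s₀ with rfl | hs
        · rw [if_pos rfl]
          simp only [Matrix.submatrix_apply, hs₀, Pi.smul_apply, smul_eq_mul]
          rcases eq_or_ne r r₁ with rfl | hrr
          · simp [hc]
          · rw [Pi.single_apply, if_neg hrr, mul_zero]
            by_contra hne
            exact hrr (hf (huniq (f r) (f r₁) hne hr₁))
        · rw [if_neg hs]
          have hgs : g s ≠ j := fun hgs => hs (hg (hgs.trans hs₀.symm))
          simp only [Matrix.submatrix_apply, hD, if_neg hs, Matrix.fromCols_apply_inl]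
          exact hA'off (f r) (g s) (Or.inr hgs)
      have hDTU : D.IsTotallyUnimodular := by
        apply Matrix.IsTotallyUnimodular.submatrix
        exact hTU.fromCols_one
      have hdetD : D.det ∈ Set.range SignType.cast := by
        rw [Matrix.isTotallyUnimodular_iff] at hDTU
        simpa using hDTU k id id
      have hcmem : c ∈ Set.range SignType.cast := by
        have : c = A (f r₁) j := hA'off (f r₁) j (Or.inl (fun hfi => hr₁ (by show A' (f r₁) j = 0; rw [hfi]; exact hA'ij)))
        rw [this]; exact hTU.apply _ _
      have : (A'.submatrix f g).det = c * D.det := by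
        rw [hkey, Matrix.det_updateCol_smul]
        congr 1
        rw [show D.updateCol s₀ ((Pi.single r₁ 1 : Fin k → ℚ)) = D from ?_]
        ext r s
        rw [Matrix.updateCol_apply]
        rcases eq_or_ne s s₀ with rfl | hs
        · rw [if_pos rfl, hDcol]
        · rw [if_neg hs]
      rw [this]
      obtain ⟨s1, h1⟩ := hcmem
      obtain ⟨s2, h2⟩ := hdetD
      exact ⟨s1 * s2, by rw [← h1, ← h2]; push_cast; ring⟩
    · push_neg at hr
      refine ⟨0, ?_⟩
      rw [SignType.coe_zero, eq_comm]
      apply Matrix.det_eq_zero_of_column_eq_zero s₀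
      intro r
      simpa [hs₀] using hr r
  · push_neg at hj
    have : A'.submatrix f g = A.submatrix f g := by
      ext r s
      exact hA'off (f r) (g s) (Or.inr (hj s))
    rw [this]
    exact hTU k f g hf hg
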